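/- The set J_{1/2} = J_{1/4} ∪ (J_{1/4} + (2,2)), where J_{1/4} = {(0,0),(1,0),(0,1),(−1,−1)} + 4ℤ², is I-stable and has upper density 1/2. -/

import Mathlib

/-- Embed a lattice point into the plane. -/
def toR (p : ℤ × ℤ) : ℝ × ℝ := ((p.1 : ℝ), (p.2 : ℝ))

/-- Determinant of the 2×2 matrix with columns `u`, `v`. -/
def det2 (u v : ℤ × ℤ) : ℤ := u.1 * v.2 - u.2 * v.1

/-- The set of lattice points in the (closed) triangle with vertices `a b c`. -/
def triPts (a b c : ℤ × ℤ) : Set (ℤ × ℤ) :=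
  {p | toR p ∈ convexHull ℝ {toR a, toR b, toR c}}

/-- A border triangle: a lattice triangle with exactly 4 lattice points, whose
fourth point lies on the boundary (not in the interior). -/
def IsBorderTri (T : Set (ℤ × ℤ)) : Prop :=
  ∃ a b c d : ℤ × ℤ, det2 (b - a) (c - a) ≠ 0 ∧
    T = triPts a b c ∧ T = {a, b, c, d} ∧ T.ncard = 4 ∧
    toR d ∉ interior (convexHull ℝ {toR a, toR b, toR c})

/-- An internal triangle: a lattice triangle with exactly 4 lattice points, whose
fourth point lies in the interior. -/
def IsInternalTri (T : Set (ℤ × ℤ)) : Prop :=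
  ∃ a b c d : ℤ × ℤ, det2 (b - a) (c - a) ≠ 0 ∧
    T = triPts a b c ∧ T = {a, b, c, d} ∧ T.ncard = 4 ∧
    toR d ∈ interior (convexHull ℝ {toR a, toR b, toR c})

/-- `S` is B-stable: no border triangle has exactly three of its points in `S`. -/
def BStable (S : Set (ℤ × ℤ)) : Prop :=
  ∀ T, IsBorderTri T → (T ∩ S).ncard ≠ 3

/-- `S` is I-stable: no internal triangle has exactly three of its points in `S`. -/
def IStable (S : Set (ℤ × ℤ)) : Prop :=
  ∀ T, IsInternalTri T → (T ∩ S).ncard ≠ 3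

/-- Upper density of a subset of `ℤ²`. -/
noncomputable def upperDensity (S : Set (ℤ × ℤ)) : ℝ :=
  Filter.limsup (fun n : ℕ =>
    ((S ∩ Set.Icc (-(n : ℤ), -(n : ℤ)) ((n : ℤ), (n : ℤ))).ncard : ℝ) /
      (2 * (n : ℝ) + 1) ^ 2) Filter.atTop

/-- The set `J_{1/4} = {(0,0),(1,0),(0,1),(−1,−1)} + 4ℤ²`. -/
def J14 : Set (ℤ × ℤ) :=
  {p | ∃ m k : ℤ,
    p - (4 * m, 4 * k) ∈ ({(0, 0), (1, 0), (0, 1), (-1, -1)} : Set (ℤ × ℤ))}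

/-- The set `J_{1/2} = J_{1/4} ∪ (J_{1/4} + (2,2))`. -/
def J12 : Set (ℤ × ℤ) := J14 ∪ {p | p - (2, 2) ∈ J14}

/-- The linear functional dual to `u`. -/
def Lf (u : ℤ × ℤ) (x : ℝ × ℝ) : ℝ := (u.1 : ℝ) * x.2 - (u.2 : ℝ) * x.1

lemma Lf_linear (u : ℤ × ℤ) : IsLinearMap ℝ (Lf u) := by
  constructor
  · intro x y; simp only [Lf, Prod.fst_add, Prod.snd_add]; ring
  · intro t x; simp only [Lf, Prod.smul_fst, Prod.smul_snd, smul_eq_mul]; ring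

lemma Lf_toR_sub (u p q : ℤ × ℤ) :
    Lf u (toR p) - Lf u (toR q) = (det2 u (p - q) : ℝ) := by
  simp only [Lf, toR, det2, Prod.fst_sub, Prod.snd_sub]
  push_cast; ring

lemma hull_bound_le {u : ℤ × ℤ} {x y z : ℝ × ℝ} {r : ℝ}
    (hx : Lf u x ≤ r) (hy : Lf u y ≤ r) (hz : Lf u z ≤ r) :
    ∀ w ∈ convexHull ℝ ({x, y, z} : Set (ℝ × ℝ)), Lf u w ≤ r := by
  have hc : Convex ℝ {w : ℝ × ℝ | Lf u w ≤ r} := convex_halfSpace_le (Lf_linear u) r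
  have hsub : ({x, y, z} : Set (ℝ × ℝ)) ⊆ {w | Lf u w ≤ r} := by
    intro w hw
    simp only [Set.mem_insert_iff, Set.mem_singleton_iff] at hw
    rcases hw with rfl | rfl | rfl <;> assumption
  exact fun w hw => convexHull_min hsub hc hw

lemma hull_bound_ge {u : ℤ × ℤ} {x y z : ℝ × ℝ} {r : ℝ}
    (hx : r ≤ Lf u x) (hy : r ≤ Lf u y) (hz : r ≤ Lf u z) :
    ∀ w ∈ convexHull ℝ ({x, y, z} : Set (ℝ × ℝ)), r ≤ Lf u w := by
  have hc : Convex ℝ {w : ℝ × ℝ | r ≤ Lf u w} := convex_halfSpace_ge (Lf_linear u) r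
  have hsub : ({x, y, z} : Set (ℝ × ℝ)) ⊆ {w | r ≤ Lf u w} := by
    intro w hw
    simp only [Set.mem_insert_iff, Set.mem_singleton_iff] at hw
    rcases hw with rfl | rfl | rfl <;> assumption
  exact fun w hw => convexHull_min hsub hc hw

lemma interior_lt {u : ℤ × ℤ} {S : Set (ℝ × ℝ)} {w v : ℝ × ℝ} {r : ℝ}
    (hS : ∀ x ∈ S, Lf u x ≤ r) (hw : w ∈ interior S) (hv : 0 < Lf u v) :
    Lf u w < r := by
  obtain ⟨ε, hε, hball⟩ := Metric.isOpen_iff.1 isOpen_interior w hw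
  set δ := ε / (2 * (‖v‖ + 1)) with hδdef
  have hn : (0:ℝ) < ‖v‖ + 1 := by positivity
  have hδ : 0 < δ := by positivity
  have hmem : w + δ • v ∈ S := by
    apply interior_subset
    apply hball
    rw [Metric.mem_ball, dist_eq_norm, add_sub_cancel_left, norm_smul,
      Real.norm_eq_abs, abs_of_pos hδ]
    have h1 : δ * (‖v‖ + 1) = ε / 2 := by
      rw [hδdef]; field_simp
    nlinarith [norm_nonneg v]
  have hlin : Lf u (w + δ • v) = Lf u w + δ * Lf u v := by
    rw [(Lf_linear u).map_add, (Lf_linear u).map_smul, smul_eq_mul]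
  have := hS _ hmem
  nlinarith [mul_pos hδ hv]

lemma interior_gt {u : ℤ × ℤ} {S : Set (ℝ × ℝ)} {w v : ℝ × ℝ} {r : ℝ}
    (hS : ∀ x ∈ S, r ≤ Lf u x) (hw : w ∈ interior S) (hv : 0 < Lf u v) :
    r < Lf u w := by
  obtain ⟨ε, hε, hball⟩ := Metric.isOpen_iff.1 isOpen_interior w hw
  set δ := ε / (2 * (‖v‖ + 1)) with hδdef
  have hn : (0:ℝ) < ‖v‖ + 1 := by positivity
  have hδ : 0 < δ := by positivity
  have hmem : w - δ • v ∈ S := by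
    apply interior_subset
    apply hball
    rw [Metric.mem_ball, dist_eq_norm, sub_sub_cancel_left, norm_neg, norm_smul,
      Real.norm_eq_abs, abs_of_pos hδ]
    have h1 : δ * (‖v‖ + 1) = ε / 2 := by
      rw [hδdef]; field_simp
    nlinarith [norm_nonneg v]
  have hlin : Lf u (w - δ • v) = Lf u w - δ * Lf u v := by
    rw [(Lf_linear u).map_sub, (Lf_linear u).map_smul, smul_eq_mul]
  have := hS _ hmem
  nlinarith [mul_pos hδ hv]

lemma mem_hull3 {x y z : ℝ × ℝ} {t1 t2 t3 : ℝ} (h1 : 0 ≤ t1) (h2 : 0 ≤ t2) (h3 : 0 ≤ t3)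
    (hs : t1 + t2 + t3 = 1) :
    t1 • x + t2 • y + t3 • z ∈ convexHull ℝ ({x, y, z} : Set (ℝ × ℝ)) := by
  have := Finset.centerMass_mem_convexHull (t := (Finset.univ : Finset (Fin 3)))
    (w := ![t1, t2, t3]) (z := ![x, y, z]) (s := ({x, y, z} : Set (ℝ × ℝ)))
    (by intro i _; fin_cases i <;> simpa)
    (by simp [Fin.sum_univ_three]; linarith)
    (by intro i _; fin_cases i <;> simp)
  have e : Finset.univ.centerMass ![t1, t2, t3] ![x, y, z] = t1 • x + t2 • y + t3 • z := by
    rw [Finset.centerMass, Fin.sum_univ_three, Fin.sum_univ_three]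
    simp [hs]
  rwa [e] at this

lemma det2_self (u : ℤ × ℤ) : det2 u u = 0 := by unfold det2; ring

lemma strict_bary (x y z w : ℤ × ℤ) (hD : 0 < det2 (y - x) (z - x))
    (hw : toR w ∈ interior (convexHull ℝ ({toR x, toR y, toR z} : Set (ℝ × ℝ)))) :
    0 < det2 (y - x) (w - x) ∧ det2 (y - x) (w - x) < det2 (y - x) (z - x) := by
  set u := y - x with hu
  set D := det2 u (z - x) with hDdef
  set r0 := Lf u (toR x) with hr0
  have hyx : Lf u (toR y) = r0 := by
    have h := Lf_toR_sub u y x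
    rw [← hu, det2_self] at h
    push_cast at h; linarith
  have hzx : Lf u (toR z) = r0 + (D : ℝ) := by
    have h := Lf_toR_sub u z x
    rw [← hDdef] at h; linarith
  have hDR : (0:ℝ) < (D:ℝ) := by exact_mod_cast hD
  have hub : ∀ p ∈ convexHull ℝ ({toR x, toR y, toR z} : Set (ℝ × ℝ)), Lf u p ≤ r0 + D :=
    hull_bound_le (by linarith) (by linarith [hyx]) (by linarith [hzx])
  have hlb : ∀ p ∈ convexHull ℝ ({toR x, toR y, toR z} : Set (ℝ × ℝ)), r0 ≤ Lf u p :=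
    hull_bound_ge (by linarith) (by linarith [hyx]) (by linarith [hzx])
  have hv : 0 < Lf u (toR z - toR x) := by
    rw [(Lf_linear u).map_sub]; linarith [hzx]
  have h1 : Lf u (toR w) < r0 + D := interior_lt hub hw hv
  have h2 : r0 < Lf u (toR w) := interior_gt hlb hw hv
  have h3 := Lf_toR_sub u w x
  constructor
  · have : (0:ℝ) < (det2 u (w - x) : ℝ) := by rw [← h3]; linarith
    exact_mod_cast this
  · have : ((det2 u (w - x)) : ℝ) < (D : ℝ) := by rw [← h3]; linarith
    exact_mod_cast this

lemma cramer_w (u v w : ℤ × ℤ) :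
    det2 u v * w.1 = det2 w v * u.1 + det2 u w * v.1 ∧
    det2 u v * w.2 = det2 w v * u.2 + det2 u w * v.2 := by
  unfold det2; constructor <;> ring

lemma coeff_eq (u v p : ℤ × ℤ) (m n : ℤ) (hD : det2 u v ≠ 0)
    (h1 : det2 u v * p.1 = m * u.1 + n * v.1)
    (h2 : det2 u v * p.2 = m * u.2 + n * v.2) :
    det2 p v = m ∧ det2 u p = n := by
  have e1 : det2 p v * det2 u v = m * det2 u v := by
    unfold det2 at h1 h2 ⊢; linear_combination v.2 * h1 - v.1 * h2
  have e2 : det2 u p * det2 u v = n * det2 u v := by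
    unfold det2 at h1 h2 ⊢; linear_combination u.1 * h2 - u.2 * h1
  exact ⟨mul_right_cancel₀ hD e1, mul_right_cancel₀ hD e2⟩

lemma add_mem_triPts (a b c p : ℤ × ℤ) (m n : ℤ) (hDpos : 0 < det2 (b - a) (c - a))
    (hm0 : 0 ≤ m) (hn0 : 0 ≤ n) (hmn : m + n ≤ det2 (b - a) (c - a))
    (h1 : det2 (b - a) (c - a) * p.1 = m * (b - a).1 + n * (c - a).1)
    (h2 : det2 (b - a) (c - a) * p.2 = m * (b - a).2 + n * (c - a).2) :
    (a + p) ∈ triPts a b c := by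
  set D := det2 (b - a) (c - a) with hDdef
  have hDR : (0:ℝ) < (D:ℝ) := by exact_mod_cast hDpos
  have hDne : (D:ℝ) ≠ 0 := ne_of_gt hDR
  simp only [Prod.fst_sub, Prod.snd_sub] at h1 h2
  have hc1 : (D:ℝ) * (p.1:ℝ) = (m:ℝ) * ((b.1:ℝ) - (a.1:ℝ)) + (n:ℝ) * ((c.1:ℝ) - (a.1:ℝ)) := by
    exact_mod_cast h1
  have hc2 : (D:ℝ) * (p.2:ℝ) = (m:ℝ) * ((b.2:ℝ) - (a.2:ℝ)) + (n:ℝ) * ((c.2:ℝ) - (a.2:ℝ)) := by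
    exact_mod_cast h2
  have hkey : toR (a + p) = (1 - (m:ℝ)/D - (n:ℝ)/D) • toR a + ((m:ℝ)/D) • toR b
      + ((n:ℝ)/D) • toR c := by
    have e1 : (toR (a + p)).1 = ((1 - (m:ℝ)/D - (n:ℝ)/D) • toR a + ((m:ℝ)/D) • toR b
        + ((n:ℝ)/D) • toR c).1 := by
      simp only [toR, Prod.fst_add, Prod.smul_fst, smul_eq_mul]
      push_cast
      field_simp
      linear_combination hc1
    have e2 : (toR (a + p)).2 = ((1 - (m:ℝ)/D - (n:ℝ)/D) • toR a + ((m:ℝ)/D) • toR b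
        + ((n:ℝ)/D) • toR c).2 := by
      simp only [toR, Prod.snd_add, Prod.smul_snd, smul_eq_mul]
      push_cast
      field_simp
      linear_combination hc2
    exact Prod.ext e1 e2
  show toR (a + p) ∈ convexHull ℝ ({toR a, toR b, toR c} : Set (ℝ × ℝ))
  rw [hkey]
  apply mem_hull3
  · have hm : (m:ℝ) + (n:ℝ) ≤ (D:ℝ) := by exact_mod_cast hmn
    have e : 1 - (m:ℝ)/D - (n:ℝ)/D = ((D:ℝ) - m - n) / D := by field_simp
    rw [e]
    apply div_nonneg _ (le_of_lt hDR)
    linarith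
  · positivity
  · positivity
  · field_simp
    ring

lemma det2_zero_left (v : ℤ × ℤ) : det2 0 v = 0 := by unfold det2; simp
lemma det2_zero_right (v : ℤ × ℤ) : det2 v 0 = 0 := by unfold det2; simp

lemma unimod_pos (a b c : ℤ × ℤ) (hD : 0 < det2 (b - a) (c - a))
    (hsub : triPts a b c ⊆ {a, b, c}) : det2 (b - a) (c - a) = 1 := by
  by_contra hne
  set u := b - a with hu
  set v := c - a with hv
  set D := det2 u v with hDdef
  have hD2 : 2 ≤ D := by omega
  have hex : ∃ w : ℤ × ℤ, ¬ (D ∣ det2 w v) ∨ ¬ (D ∣ det2 u w) := by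
    by_contra hno
    push_neg at hno
    obtain ⟨k1, hk1⟩ := (hno (1, 0)).1
    obtain ⟨k2, hk2⟩ := (hno (0, 1)).1
    obtain ⟨k3, hk3⟩ := (hno (1, 0)).2
    obtain ⟨k4, hk4⟩ := (hno (0, 1)).2
    unfold det2 at hk1 hk2 hk3 hk4
    simp only [mul_one, mul_zero, one_mul, zero_mul, sub_zero, zero_sub] at hk1 hk2 hk3 hk4
    -- hk1 : v.2 = D * k1, hk2 : -v.1 = D * k2, hk3 : -u.2 = D * k3, hk4 : u.1 = D * k4
    have hv1 : v.1 = -(D * k2) := by linarith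
    have hu2 : u.2 = -(D * k3) := by linarith
    have key : det2 u v = (D * k4) * (D * k1) - (-(D * k3)) * (-(D * k2)) := by
      unfold det2
      rw [hk1, hk4, hv1, hu2]
    have hDD : D = D * D * (k4 * k1 - k3 * k2) := by
      calc D = det2 u v := hDdef
        _ = (D * k4) * (D * k1) - (-(D * k3)) * (-(D * k2)) := key
        _ = D * D * (k4 * k1 - k3 * k2) := by ring
    rcases le_or_gt (k4 * k1 - k3 * k2) 0 with h | h
    · nlinarith [mul_pos hD hD]
    · nlinarith [mul_pos hD hD]
  obtain ⟨w, hw⟩ := hex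
  set m := det2 w v with hm
  set n := det2 u w with hn
  have hcram := cramer_w u v w
  set m' := m % D with hm'
  set n' := n % D with hn'
  have hDne : D ≠ 0 := by omega
  have hm0 : 0 ≤ m' := Int.emod_nonneg m hDne
  have hn0 : 0 ≤ n' := Int.emod_nonneg n hDne
  have hmD : m' < D := Int.emod_lt_of_pos m hD
  have hnD : n' < D := Int.emod_lt_of_pos n hD
  have hnb : ¬ (m' = 0 ∧ n' = 0) := by
    rintro ⟨h1, h2⟩
    rcases hw with h | h
    · exact h (Int.dvd_of_emod_eq_zero h1)
    · exact h (Int.dvd_of_emod_eq_zero h2)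
  set p : ℤ × ℤ := w - (m / D) • u - (n / D) • v with hp
  have hpc1 : p.1 = w.1 - (m / D) * u.1 - (n / D) * v.1 := by
    simp [hp, Prod.fst_sub, Prod.smul_fst, smul_eq_mul]
  have hpc2 : p.2 = w.2 - (m / D) * u.2 - (n / D) * v.2 := by
    simp [hp, Prod.snd_sub, Prod.smul_snd, smul_eq_mul]
  have e1 := Int.mul_ediv_add_emod m D
  have e2 := Int.mul_ediv_add_emod n D
  have hp1 : D * p.1 = m' * u.1 + n' * v.1 := by
    rw [hpc1]
    linear_combination hcram.1 - u.1 * e1 - v.1 * e2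
  have hp2 : D * p.2 = m' * u.2 + n' * v.2 := by
    rw [hpc2]
    linear_combination hcram.2 - u.2 * e1 - v.2 * e2
  by_cases hcase : m' + n' ≤ D
  · have hmem : (a + p) ∈ triPts a b c :=
      add_mem_triPts a b c p m' n' hD hm0 hn0 hcase hp1 hp2
    have hq := coeff_eq u v p m' n' hDne hp1 hp2
    have h3 := hsub hmem
    simp only [Set.mem_insert_iff, Set.mem_singleton_iff] at h3
    rcases h3 with h | h | h
    · have hp0 : p = 0 := by
        have : a + p = a + 0 := by rw [h]; ring
        exact add_left_cancel this
      have h1 : det2 p v = m' := hq.1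
      have h2 : det2 u p = n' := hq.2
      rw [hp0, det2_zero_left] at h1
      rw [hp0, det2_zero_right] at h2
      exact hnb ⟨h1.symm, h2.symm⟩
    · have hpu : p = u := by rw [hu, ← h]; ring
      have h1 : det2 u v = m' := by rw [← hpu]; exact hq.1
      clear_value u v D m n
      omega
    · have hpv : p = v := by rw [hv, ← h]; ring
      have h2 : det2 u v = n' := by rw [← hpv]; exact hq.2
      clear_value u v D m n
      omega
  · push_neg at hcase
    set p2 : ℤ × ℤ := u + v - p with hp2def
    have hq1 : D * p2.1 = (D - m') * u.1 + (D - n') * v.1 := by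
      simp only [hp2def, Prod.fst_sub, Prod.fst_add]
      linear_combination - hp1
    have hq2 : D * p2.2 = (D - m') * u.2 + (D - n') * v.2 := by
      simp only [hp2def, Prod.snd_sub, Prod.snd_add]
      linear_combination - hp2
    have hmem : (a + p2) ∈ triPts a b c :=
      add_mem_triPts a b c p2 (D - m') (D - n') hD (by omega) (by omega)
        (by show (D - m') + (D - n') ≤ D; omega) hq1 hq2
    have hq := coeff_eq u v p2 (D - m') (D - n') hDne hq1 hq2
    have h3 := hsub hmem
    simp only [Set.mem_insert_iff, Set.mem_singleton_iff] at h3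
    rcases h3 with h | h | h
    · have hp0 : p2 = 0 := by
        have : a + p2 = a + 0 := by rw [h]; ring
        exact add_left_cancel this
      have h1 : det2 p2 v = D - m' := hq.1
      rw [hp0, det2_zero_left] at h1
      clear_value u v D m n p2
      omega
    · have hpu : p2 = u := by rw [hu, ← h]; ring
      have h2 : det2 u p2 = D - n' := hq.2
      rw [hpu, det2_self] at h2
      clear_value u v D m n p2
      omega
    · have hpv : p2 = v := by rw [hv, ← h]; ring
      have h1 : det2 p2 v = D - m' := hq.1
      rw [hpv, det2_self] at h1
      clear_value u v D m n p2
      omega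

lemma det2_swap (u v : ℤ × ℤ) : det2 u v = - det2 v u := by unfold det2; ring

lemma unimod (a b c : ℤ × ℤ) (hD : det2 (b - a) (c - a) ≠ 0)
    (hsub : triPts a b c ⊆ {a, b, c}) :
    det2 (b - a) (c - a) = 1 ∨ det2 (b - a) (c - a) = -1 := by
  rcases lt_or_gt_of_ne hD with h | h
  · right
    have e : det2 (c - a) (b - a) = - det2 (b - a) (c - a) := det2_swap _ _
    have h2 : 0 < det2 (c - a) (b - a) := by omega
    have hsub2 : triPts a c b ⊆ ({a, c, b} : Set (ℤ × ℤ)) := by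
      intro x hx
      have hx' : x ∈ triPts a b c := by
        unfold triPts at hx ⊢
        rwa [Set.pair_comm (toR b) (toR c)]
      have := hsub hx'
      simp only [Set.mem_insert_iff, Set.mem_singleton_iff] at this ⊢
      tauto
    have := unimod_pos a c b h2 hsub2
    omega
  · left; exact unimod_pos a b c h hsub

lemma not_mem_small (a b c d : ℤ × ℤ) (hpos : 0 < det2 (b - a) (d - a))
    (hlt : det2 (b - a) (d - a) < det2 (b - a) (c - a))
    (hc : toR c ∈ convexHull ℝ ({toR a, toR b, toR d} : Set (ℝ × ℝ))) : False := by
  set u := b - a with hu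
  have hyval : Lf u (toR b) = Lf u (toR a) := by
    have h := Lf_toR_sub u b a
    rw [← hu, det2_self] at h
    push_cast at h; linarith
  have hdval : Lf u (toR d) = Lf u (toR a) + (det2 u (d - a) : ℝ) := by
    have h := Lf_toR_sub u d a; linarith
  have hcval : Lf u (toR c) = Lf u (toR a) + (det2 u (c - a) : ℝ) := by
    have h := Lf_toR_sub u c a; linarith
  have hposR : (0:ℝ) < (det2 u (d - a) : ℝ) := by exact_mod_cast hpos
  have hltR : ((det2 u (d - a)) : ℝ) < (det2 u (c - a) : ℝ) := by exact_mod_cast hlt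
  have hub := hull_bound_le (u := u) (r := Lf u (toR a) + (det2 u (d - a) : ℝ))
    (by linarith) (by linarith) (by linarith) (toR c) hc
  linarith

lemma subtri (a b c d : ℤ × ℤ) (h1 : 0 < det2 (b - a) (d - a))
    (h2 : det2 (b - a) (d - a) < det2 (b - a) (c - a))
    (hT : triPts a b c = {a, b, c, d})
    (hintm : toR d ∈ convexHull ℝ ({toR a, toR b, toR c} : Set (ℝ × ℝ))) :
    triPts a b d ⊆ {a, b, d} := by
  intro x hx
  have hx' : x ∈ triPts a b c := by
    have hsub : ({toR a, toR b, toR d} : Set (ℝ × ℝ)) ⊆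
        convexHull ℝ ({toR a, toR b, toR c} : Set (ℝ × ℝ)) := by
      intro y hy
      simp only [Set.mem_insert_iff, Set.mem_singleton_iff] at hy
      rcases hy with rfl | rfl | rfl
      · exact subset_convexHull ℝ _ (by simp)
      · exact subset_convexHull ℝ _ (by simp)
      · exact hintm
    exact convexHull_min hsub (convex_convexHull ℝ _) hx
  rw [hT] at hx'
  simp only [Set.mem_insert_iff, Set.mem_singleton_iff] at hx' ⊢
  rcases hx' with rfl | rfl | rfl | rfl
  · tauto
  · tauto
  · exact absurd (not_mem_small a b x d h1 h2 hx) not_false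
  · tauto

lemma internal_pos (a b c d : ℤ × ℤ) (hD : 0 < det2 (b - a) (c - a))
    (hT : triPts a b c = {a, b, c, d})
    (hint : toR d ∈ interior (convexHull ℝ ({toR a, toR b, toR c} : Set (ℝ × ℝ)))) :
    det2 (b - a) (c - a) = 3 ∧ 3 * d.1 = a.1 + b.1 + c.1 ∧ 3 * d.2 = a.2 + b.2 + c.2 := by
  have hintm : toR d ∈ convexHull ℝ ({toR a, toR b, toR c} : Set (ℝ × ℝ)) :=
    interior_subset hint
  have perm1 : ({toR b, toR c, toR a} : Set (ℝ × ℝ)) = {toR a, toR b, toR c} := by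
    ext x; simp only [Set.mem_insert_iff, Set.mem_singleton_iff]; tauto
  have perm2 : ({toR c, toR a, toR b} : Set (ℝ × ℝ)) = {toR a, toR b, toR c} := by
    ext x; simp only [Set.mem_insert_iff, Set.mem_singleton_iff]; tauto
  have hD2 : 0 < det2 (c - b) (a - b) := by
    have e : det2 (c - b) (a - b) = det2 (b - a) (c - a) := by
      unfold det2; simp only [Prod.fst_sub, Prod.snd_sub]; ring
    omega
  have hD3 : 0 < det2 (a - c) (b - c) := by
    have e : det2 (a - c) (b - c) = det2 (b - a) (c - a) := by
      unfold det2; simp only [Prod.fst_sub, Prod.snd_sub]; ring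
    omega
  have h1 := strict_bary a b c d hD hint
  have h2 := strict_bary b c a d hD2 (by rw [perm1]; exact hint)
  have h3 := strict_bary c a b d hD3 (by rw [perm2]; exact hint)
  have hTbca : triPts b c a = {b, c, a, d} := by
    have e1 : triPts b c a = triPts a b c := by
      unfold triPts; rw [perm1]
    rw [e1, hT]; ext x
    simp only [Set.mem_insert_iff, Set.mem_singleton_iff]; tauto
  have hTcab : triPts c a b = {c, a, b, d} := by
    have e1 : triPts c a b = triPts a b c := by
      unfold triPts; rw [perm2]
    rw [e1, hT]; ext x
    simp only [Set.mem_insert_iff, Set.mem_singleton_iff]; tauto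
  have s1 := subtri a b c d h1.1 h1.2 hT hintm
  have s2 := subtri b c a d h2.1 h2.2 hTbca (by rw [perm1]; exact hintm)
  have s3 := subtri c a b d h3.1 h3.2 hTcab (by rw [perm2]; exact hintm)
  have e1 := unimod a b d (by omega) s1
  have e2 := unimod b c d (by omega) s2
  have e3 := unimod c a d (by omega) s3
  have v1 : det2 (b - a) (d - a) = 1 := by omega
  have v2 : det2 (c - b) (d - b) = 1 := by omega
  have v3 : det2 (a - c) (d - c) = 1 := by omega
  have hsum : det2 (c - b) (d - b) + det2 (a - c) (d - c) + det2 (b - a) (d - a)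
      = det2 (b - a) (c - a) := by
    unfold det2; simp only [Prod.fst_sub, Prod.snd_sub]; ring
  have hcr1 : det2 (c - b) (d - b) * a.1 + det2 (a - c) (d - c) * b.1
      + det2 (b - a) (d - a) * c.1 = det2 (b - a) (c - a) * d.1 := by
    unfold det2; simp only [Prod.fst_sub, Prod.snd_sub]; ring
  have hcr2 : det2 (c - b) (d - b) * a.2 + det2 (a - c) (d - c) * b.2
      + det2 (b - a) (d - a) * c.2 = det2 (b - a) (c - a) * d.2 := by
    unfold det2; simp only [Prod.fst_sub, Prod.snd_sub]; ring
  rw [v1, v2, v3] at hsum hcr1 hcr2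
  have hDval : det2 (b - a) (c - a) = 3 := by omega
  rw [hDval] at hcr1 hcr2
  refine ⟨hDval, by omega, by omega⟩

lemma memJ14 (p : ℤ × ℤ) : p ∈ J14 ↔
    ((p.1 % 4 = 0 ∧ p.2 % 4 = 0) ∨ (p.1 % 4 = 1 ∧ p.2 % 4 = 0) ∨
     (p.1 % 4 = 0 ∧ p.2 % 4 = 1) ∨ (p.1 % 4 = 3 ∧ p.2 % 4 = 3)) := by
  constructor
  · rintro ⟨m, k, h⟩
    simp only [Set.mem_insert_iff, Set.mem_singleton_iff, Prod.ext_iff, Prod.fst_sub,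
      Prod.snd_sub] at h
    rcases h with ⟨h1, h2⟩ | ⟨h1, h2⟩ | ⟨h1, h2⟩ | ⟨h1, h2⟩
    · left; omega
    · right; left; omega
    · right; right; left; omega
    · right; right; right; omega
  · rintro (⟨h1, h2⟩ | ⟨h1, h2⟩ | ⟨h1, h2⟩ | ⟨h1, h2⟩)
    · refine ⟨p.1 / 4, p.2 / 4, ?_⟩
      simp only [Set.mem_insert_iff, Set.mem_singleton_iff, Prod.ext_iff, Prod.fst_sub,
        Prod.snd_sub]
      left; omega
    · refine ⟨(p.1 - 1) / 4, p.2 / 4, ?_⟩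
      simp only [Set.mem_insert_iff, Set.mem_singleton_iff, Prod.ext_iff, Prod.fst_sub,
        Prod.snd_sub]
      right; left; omega
    · refine ⟨p.1 / 4, (p.2 - 1) / 4, ?_⟩
      simp only [Set.mem_insert_iff, Set.mem_singleton_iff, Prod.ext_iff, Prod.fst_sub,
        Prod.snd_sub]
      right; right; left; omega
    · refine ⟨(p.1 + 1) / 4, (p.2 + 1) / 4, ?_⟩
      simp only [Set.mem_insert_iff, Set.mem_singleton_iff, Prod.ext_iff, Prod.fst_sub,
        Prod.snd_sub]
      right; right; right; omega

lemma memJ12 (p : ℤ × ℤ) : p ∈ J12 ↔ ((p.1 % 4 ≤ 1) ↔ (p.2 % 4 ≤ 1)) := by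
  have h1 := memJ14 p
  have h2 := memJ14 (p - (2, 2))
  simp only [Prod.fst_sub, Prod.snd_sub] at h2
  constructor
  · rintro (h | h)
    · rw [h1] at h; constructor <;> intro <;> omega
    · rw [Set.mem_setOf_eq, h2] at h; constructor <;> intro <;> omega
  · intro h
    have hq : (p.1 % 4 ≤ 1 ∧ p.2 % 4 ≤ 1) ∨ (¬ (p.1 % 4 ≤ 1) ∧ ¬ (p.2 % 4 ≤ 1)) := by
      by_cases hq : p.1 % 4 ≤ 1
      · exact Or.inl ⟨hq, h.mp hq⟩
      · exact Or.inr ⟨hq, fun hh => hq (h.mpr hh)⟩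
    clear h
    by_cases hl : p ∈ J14
    · exact Or.inl hl
    · rw [h1] at hl
      right; rw [Set.mem_setOf_eq, h2]; omega

def QZ (q : ZMod 4 × ZMod 4) : Prop := (q.1 = 0 ∨ q.1 = 1) ↔ (q.2 = 0 ∨ q.2 = 1)

instance : DecidablePred QZ := fun q => by unfold QZ; infer_instance

lemma castMod4 (x : ℤ) : ((x : ZMod 4) = 0 ∨ (x : ZMod 4) = 1) ↔ x % 4 ≤ 1 := by
  have h0 : ((x : ZMod 4) = 0) ↔ x % 4 = 0 := by
    have := ZMod.intCast_eq_intCast_iff' x 0 4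
    simpa using this
  have h1 : ((x : ZMod 4) = 1) ↔ x % 4 = 1 := by
    have := ZMod.intCast_eq_intCast_iff' x 1 4
    simpa using this
  rw [h0, h1]
  omega

lemma keyZ : ∀ A B C : ZMod 4 × ZMod 4,
    ((B.1-A.1)*(C.2-A.2) - (B.2-A.2)*(C.1-A.1) = 1 ∨
     (B.1-A.1)*(C.2-A.2) - (B.2-A.2)*(C.1-A.1) = 3) →
    ((QZ A ∧ QZ B ∧ QZ C → QZ (3*(A.1+B.1+C.1), 3*(A.2+B.2+C.2))) ∧
     (QZ (3*(A.1+B.1+C.1), 3*(A.2+B.2+C.2)) ∧ QZ B ∧ QZ C → QZ A) ∧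
     (QZ (3*(A.1+B.1+C.1), 3*(A.2+B.2+C.2)) ∧ QZ A ∧ QZ C → QZ B) ∧
     (QZ (3*(A.1+B.1+C.1), 3*(A.2+B.2+C.2)) ∧ QZ A ∧ QZ B → QZ C)) := by
  decide

lemma memJ12Z (p : ℤ × ℤ) : p ∈ J12 ↔ QZ ((p.1 : ZMod 4), (p.2 : ZMod 4)) := by
  rw [memJ12]; unfold QZ; rw [castMod4, castMod4]

lemma mod4main (a b c d : ℤ × ℤ) (h31 : 3 * d.1 = a.1 + b.1 + c.1)
    (h32 : 3 * d.2 = a.2 + b.2 + c.2)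
    (hdet : det2 (b - a) (c - a) = 3 ∨ det2 (b - a) (c - a) = -3) :
    (a ∈ J12 ∧ b ∈ J12 ∧ c ∈ J12 → d ∈ J12) ∧
    (d ∈ J12 ∧ b ∈ J12 ∧ c ∈ J12 → a ∈ J12) ∧
    (d ∈ J12 ∧ a ∈ J12 ∧ c ∈ J12 → b ∈ J12) ∧
    (d ∈ J12 ∧ a ∈ J12 ∧ b ∈ J12 → c ∈ J12) := by
  set A : ZMod 4 × ZMod 4 := ((a.1 : ZMod 4), (a.2 : ZMod 4)) with hA
  set B : ZMod 4 × ZMod 4 := ((b.1 : ZMod 4), (b.2 : ZMod 4)) with hB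
  set C : ZMod 4 × ZMod 4 := ((c.1 : ZMod 4), (c.2 : ZMod 4)) with hC
  have hd1 : (d.1 : ZMod 4) = 3 * (A.1 + B.1 + C.1) := by
    have := congrArg (fun z : ℤ => (z : ZMod 4)) h31
    push_cast at this
    rw [hA, hB, hC]; dsimp
    have h8 : (8 : ZMod 4) = 0 := by decide
    linear_combination 3 * this - (d.1 : ZMod 4) * h8
  have hd2 : (d.2 : ZMod 4) = 3 * (A.2 + B.2 + C.2) := by
    have := congrArg (fun z : ℤ => (z : ZMod 4)) h32
    push_cast at this
    rw [hA, hB, hC]; dsimp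
    have h8 : (8 : ZMod 4) = 0 := by decide
    linear_combination 3 * this - (d.2 : ZMod 4) * h8
  have hdetZ : (B.1 - A.1) * (C.2 - A.2) - (B.2 - A.2) * (C.1 - A.1) = 1 ∨
      (B.1 - A.1) * (C.2 - A.2) - (B.2 - A.2) * (C.1 - A.1) = 3 := by
    unfold det2 at hdet
    rcases hdet with h | h <;> have := congrArg (fun z : ℤ => (z : ZMod 4)) h <;>
      simp only [Prod.fst_sub, Prod.snd_sub] at this <;> push_cast at this <;>
      rw [hA, hB, hC] <;> dsimp
    · right; linear_combination this
    · left
      have h4 : (4 : ZMod 4) = 0 := by decide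
      linear_combination this - h4
  have K := keyZ A B C hdetZ
  have ed : ((d.1 : ZMod 4), (d.2 : ZMod 4)) = (3*(A.1+B.1+C.1), 3*(A.2+B.2+C.2)) := by
    rw [Prod.ext_iff]; exact ⟨hd1, hd2⟩
  rw [memJ12Z a, memJ12Z b, memJ12Z c, memJ12Z d, ← hA, ← hB, ← hC, ed]
  exact K

lemma internal_char (a b c d : ℤ × ℤ) (hD : det2 (b - a) (c - a) ≠ 0)
    (hT : triPts a b c = {a, b, c, d})
    (hint : toR d ∈ interior (convexHull ℝ ({toR a, toR b, toR c} : Set (ℝ × ℝ)))) :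
    (det2 (b - a) (c - a) = 3 ∨ det2 (b - a) (c - a) = -3) ∧
      3 * d.1 = a.1 + b.1 + c.1 ∧ 3 * d.2 = a.2 + b.2 + c.2 := by
  rcases lt_or_gt_of_ne hD with h | h
  · have e : det2 (c - a) (b - a) = - det2 (b - a) (c - a) := det2_swap _ _
    have hpos : 0 < det2 (c - a) (b - a) := by omega
    have perm : ({toR a, toR c, toR b} : Set (ℝ × ℝ)) = {toR a, toR b, toR c} := by
      ext x; simp only [Set.mem_insert_iff, Set.mem_singleton_iff]; tauto
    have hT' : triPts a c b = {a, c, b, d} := by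
      have e1 : triPts a c b = triPts a b c := by unfold triPts; rw [perm]
      rw [e1, hT]; ext x; simp only [Set.mem_insert_iff, Set.mem_singleton_iff]; tauto
    have hh := internal_pos a c b d hpos hT' (by rw [perm]; exact hint)
    exact ⟨by omega, by omega, by omega⟩
  · have hh := internal_pos a b c d h hT hint
    exact ⟨Or.inl hh.1, hh.2.1, hh.2.2⟩

lemma ncard3_le (x y z : ℤ × ℤ) : ({x, y, z} : Set (ℤ × ℤ)).ncard ≤ 3 := by
  apply le_trans (Set.ncard_insert_le _ _)
  have h1 := Set.ncard_insert_le y ({z} : Set (ℤ × ℤ))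
  have h2 : ({z} : Set (ℤ × ℤ)).ncard = 1 := Set.ncard_singleton z
  omega

lemma collapse_ab (a b c d : ℤ × ℤ) (h : a = b) : ({a, b, c, d} : Set (ℤ × ℤ)) = {b, c, d} := by
  ext t; simp only [Set.mem_insert_iff, Set.mem_singleton_iff, h]; tauto
lemma collapse_ac (a b c d : ℤ × ℤ) (h : a = c) : ({a, b, c, d} : Set (ℤ × ℤ)) = {b, c, d} := by
  ext t; simp only [Set.mem_insert_iff, Set.mem_singleton_iff, h]; tauto
lemma collapse_ad (a b c d : ℤ × ℤ) (h : a = d) : ({a, b, c, d} : Set (ℤ × ℤ)) = {b, c, d} := by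
  ext t; simp only [Set.mem_insert_iff, Set.mem_singleton_iff, h]; tauto
lemma collapse_bc (a b c d : ℤ × ℤ) (h : b = c) : ({a, b, c, d} : Set (ℤ × ℤ)) = {a, c, d} := by
  ext t; simp only [Set.mem_insert_iff, Set.mem_singleton_iff, h]; tauto
lemma collapse_bd (a b c d : ℤ × ℤ) (h : b = d) : ({a, b, c, d} : Set (ℤ × ℤ)) = {a, c, d} := by
  ext t; simp only [Set.mem_insert_iff, Set.mem_singleton_iff, h]; tauto
lemma collapse_cd (a b c d : ℤ × ℤ) (h : c = d) : ({a, b, c, d} : Set (ℤ × ℤ)) = {a, b, d} := by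
  ext t; simp only [Set.mem_insert_iff, Set.mem_singleton_iff, h]; tauto

open Classical in
lemma inter_filter4 (a b c d : ℤ × ℤ) (S : Set (ℤ × ℤ)) :
    ({a, b, c, d} : Set (ℤ × ℤ)) ∩ S
      = ↑(({a, b, c, d} : Finset (ℤ × ℤ)).filter (· ∈ S)) := by
  ext x
  simp only [Finset.coe_filter, Finset.mem_insert, Finset.mem_singleton,
    Set.mem_inter_iff, Set.mem_insert_iff, Set.mem_singleton_iff, Set.mem_setOf_eq]
set_option maxHeartbeats 1000000 in
theorem istable : IStable J12 := by
  classical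
  rintro T ⟨a, b, c, d, hD, hT1, hT2, hn4, hint⟩ hcard3
  have hT : triPts a b c = {a, b, c, d} := hT1.symm.trans hT2
  have hch := internal_char a b c d hD hT hint
  obtain ⟨hdet, h31, h32⟩ := hch
  have key := mod4main a b c d h31 h32 hdet
  have hC : ({a, b, c, d} : Set (ℤ × ℤ)).ncard = 4 := by rw [← hT2]; exact hn4
  have hab : a ≠ b := fun h => by
    rw [collapse_ab a b c d h] at hC; have := ncard3_le b c d; omega
  have hac : a ≠ c := fun h => by
    rw [collapse_ac a b c d h] at hC; have := ncard3_le b c d; omega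
  have had : a ≠ d := fun h => by
    rw [collapse_ad a b c d h] at hC; have := ncard3_le b c d; omega
  have hbc : b ≠ c := fun h => by
    rw [collapse_bc a b c d h] at hC; have := ncard3_le a c d; omega
  have hbd : b ≠ d := fun h => by
    rw [collapse_bd a b c d h] at hC; have := ncard3_le a c d; omega
  have hcd : c ≠ d := fun h => by
    rw [collapse_cd a b c d h] at hC; have := ncard3_le a b d; omega
  rw [hT2, inter_filter4 a b c d J12, Set.ncard_coe_finset] at hcard3
  have hsum : (({a, b, c, d} : Finset (ℤ × ℤ)).filter (· ∈ J12)).card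
      = (if a ∈ J12 then 1 else 0) + ((if b ∈ J12 then 1 else 0)
        + ((if c ∈ J12 then 1 else 0) + (if d ∈ J12 then 1 else 0))) := by
    rw [Finset.card_filter]
    rw [Finset.sum_insert (by simp only [Finset.mem_insert, Finset.mem_singleton]; push_neg; exact ⟨hab, hac, had⟩)]
    rw [Finset.sum_insert (by simp only [Finset.mem_insert, Finset.mem_singleton]; push_neg; exact ⟨hbc, hbd⟩)]
    rw [Finset.sum_insert (by simp only [Finset.mem_singleton]; exact hcd)]
    rw [Finset.sum_singleton]
  rw [hsum] at hcard3
  by_cases ha : a ∈ J12 <;> by_cases hb : b ∈ J12 <;> by_cases hc : c ∈ J12 <;>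
    by_cases hd : d ∈ J12 <;> simp only [ha, hb, hc, hd, if_true, if_false] at hcard3 <;>
    first
      | omega
      | exact hd (key.1 ⟨ha, hb, hc⟩)
      | exact ha (key.2.1 ⟨hd, hb, hc⟩)
      | exact hb (key.2.2.1 ⟨hd, ha, hc⟩)
      | exact hc (key.2.2.2 ⟨hd, ha, hb⟩)

open Finset in
lemma countA (n : ℕ) : (((Finset.Icc (-(n:ℤ)) (n:ℤ))).filter (fun x => x % 4 ≤ 1)).card
    = n + (if ((n:ℤ) % 4 ≤ 1) then 1 else 0) := by
  induction n with
  | zero =>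
    simp only [Nat.cast_zero, neg_zero, Finset.Icc_self, Finset.filter_singleton]
    norm_num
  | succ n ih =>
    have hstep : Finset.Icc (-((n:ℤ)+1)) ((n:ℤ)+1)
        = insert (-((n:ℤ)+1)) (insert ((n:ℤ)+1) (Finset.Icc (-(n:ℤ)) (n:ℤ))) := by
      ext x
      simp only [Finset.mem_Icc, Finset.mem_insert]
      omega
    have hc : ((n+1 : ℕ) : ℤ) = (n:ℤ)+1 := by push_cast; ring
    rw [hc, hstep, Finset.filter_insert, Finset.filter_insert]
    have hnm1 : ((n:ℤ)+1) ∉ (Finset.Icc (-(n:ℤ)) (n:ℤ)).filter (fun x => x % 4 ≤ 1) := by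
      intro hmem
      have := Finset.mem_of_mem_filter _ hmem
      simp only [Finset.mem_Icc] at this
      omega
    have hnm2 : (-((n:ℤ)+1)) ∉ (Finset.Icc (-(n:ℤ)) (n:ℤ)).filter (fun x => x % 4 ≤ 1) := by
      intro hmem
      have := Finset.mem_of_mem_filter _ hmem
      simp only [Finset.mem_Icc] at this
      omega
    have hnm3 : (-((n:ℤ)+1)) ≠ ((n:ℤ)+1) := by omega
    split_ifs with hp hq hq
    · rw [Finset.card_insert_of_notMem (by
        simp only [Finset.mem_insert]
        push_neg
        exact ⟨hnm3, hnm2⟩)]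
      rw [Finset.card_insert_of_notMem hnm1, ih]
      split_ifs with h1 h2 <;> omega
    · rw [Finset.card_insert_of_notMem hnm2, ih]
      split_ifs with h1 h2 <;> omega
    · rw [Finset.card_insert_of_notMem hnm1, ih]
      split_ifs with h1 h2 <;> omega
    · rw [ih]
      split_ifs with h1 h2 <;> omega

open Finset in
lemma countBox (n : ℕ) :
    (J12 ∩ Set.Icc (-(n : ℤ), -(n : ℤ)) ((n : ℤ), (n : ℤ))).ncard = 2*n^2 + 2*n + 1 := by
  classical
  have hfin : J12 ∩ Set.Icc (-(n : ℤ), -(n : ℤ)) ((n : ℤ), (n : ℤ))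
      = ↑((Finset.Icc (-(n : ℤ), -(n : ℤ)) ((n : ℤ), (n : ℤ))).filter (· ∈ J12)) := by
    ext p
    constructor
    · rintro ⟨h1, h2⟩
      simp only [Finset.coe_filter, Set.mem_setOf_eq]
      rw [← Finset.coe_Icc] at h2
      exact ⟨Finset.mem_coe.mp h2, h1⟩
    · intro h
      simp only [Finset.coe_filter, Set.mem_setOf_eq] at h
      refine ⟨h.2, ?_⟩
      rw [← Finset.coe_Icc]
      exact Finset.mem_coe.mpr h.1
  rw [hfin, Set.ncard_coe_finset]
  have hprod : Finset.Icc ((-(n : ℤ), -(n : ℤ)) : ℤ × ℤ) (((n : ℤ), (n : ℤ)) : ℤ × ℤ)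
      = Finset.Icc (-(n:ℤ)) (n:ℤ) ×ˢ Finset.Icc (-(n:ℤ)) (n:ℤ) := Finset.Icc_prod_def _ _
  rw [hprod]
  have hcongr : (Finset.Icc (-(n:ℤ)) (n:ℤ) ×ˢ Finset.Icc (-(n:ℤ)) (n:ℤ)).filter (· ∈ J12)
      = (Finset.Icc (-(n:ℤ)) (n:ℤ) ×ˢ Finset.Icc (-(n:ℤ)) (n:ℤ)).filter
          (fun p => (p.1 % 4 ≤ 1 ∧ p.2 % 4 ≤ 1) ∨ (¬ (p.1 % 4 ≤ 1) ∧ ¬ (p.2 % 4 ≤ 1))) := by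
    apply Finset.filter_congr
    intro p _
    rw [memJ12 p]
    constructor
    · intro h
      by_cases h1 : p.1 % 4 ≤ 1
      · exact Or.inl ⟨h1, h.mp h1⟩
      · exact Or.inr ⟨h1, fun hh => h1 (h.mpr hh)⟩
    · intro h
      constructor <;> intro <;> tauto
  rw [hcongr, Finset.filter_or,
    Finset.filter_product (p := fun x : ℤ => x % 4 ≤ 1) (q := fun x : ℤ => x % 4 ≤ 1),
    Finset.filter_product (p := fun x : ℤ => ¬ (x % 4 ≤ 1)) (q := fun x : ℤ => ¬ (x % 4 ≤ 1))]
  rw [Finset.card_union_of_disjoint (by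
    rw [Finset.disjoint_left]
    rintro ⟨x, y⟩ hmem1 hmem2
    simp only [Finset.mem_product, Finset.mem_filter] at hmem1 hmem2
    tauto)]
  rw [Finset.card_product, Finset.card_product]
  have hcardIcc : (Finset.Icc (-(n:ℤ)) (n:ℤ)).card = 2*n + 1 := by
    rw [Int.card_Icc]
    omega
  have hA := countA n
  have hB : ((Finset.Icc (-(n:ℤ)) (n:ℤ)).filter (fun x => ¬ (x % 4 ≤ 1))).card
      = 2*n + 1 - ((Finset.Icc (-(n:ℤ)) (n:ℤ)).filter (fun x => x % 4 ≤ 1)).card := by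
    have := Finset.card_filter_add_card_filter_not
      (s := Finset.Icc (-(n:ℤ)) (n:ℤ)) (p := fun x => x % 4 ≤ 1)
    omega
  rw [hB, hA]
  split_ifs with h1
  · have : (n + 1) * (n + 1) + (2*n + 1 - (n + 1)) * (2*n + 1 - (n + 1)) = 2*n^2+2*n+1 := by
      have e : 2*n + 1 - (n + 1) = n := by omega
      rw [e]; ring
    simpa using this
  · have : (n + 0) * (n + 0) + (2*n + 1 - (n + 0)) * (2*n + 1 - (n + 0)) = 2*n^2+2*n+1 := by
      have e : 2*n + 1 - (n + 0) = n + 1 := by omega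
      rw [e]; ring_nf
    simpa using this


lemma density12 : upperDensity J12 = 1 / 2 := by
  unfold upperDensity
  have hfun : (fun n : ℕ =>
      ((J12 ∩ Set.Icc (-(n : ℤ), -(n : ℤ)) ((n : ℤ), (n : ℤ))).ncard : ℝ) /
        (2 * (n : ℝ) + 1) ^ 2)
      = fun n : ℕ => 1/2 + (1/2) * (1 / (2 * (n : ℝ) + 1) ^ 2) := by
    funext n
    rw [countBox n]
    have h : (2 * (n:ℝ) + 1) ≠ 0 := by positivity
    push_cast
    field_simp
    ring
  rw [hfun]
  have htend : Filter.Tendsto (fun n : ℕ => 1/2 + (1/2) * (1 / (2 * (n : ℝ) + 1) ^ 2))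
      Filter.atTop (nhds (1/2)) := by
    have h1 : Filter.Tendsto (fun n : ℕ => (2 * (n : ℝ) + 1) ^ 2) Filter.atTop Filter.atTop := by
      apply Filter.tendsto_atTop_mono (f := fun n : ℕ => (n : ℝ))
      · intro n
        have : (0:ℝ) ≤ n := Nat.cast_nonneg n
        nlinarith
      · exact tendsto_natCast_atTop_atTop
    have h2 : Filter.Tendsto (fun n : ℕ => 1 / (2 * (n : ℝ) + 1) ^ 2) Filter.atTop (nhds 0) := by
      simpa only [one_div, Pi.inv_def] using h1.inv_tendsto_atTop
    have h3 := (tendsto_const_nhds (x := (1/2 : ℝ)) (f := Filter.atTop (α := ℕ))).add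
      (h2.const_mul (1/2 : ℝ))
    simpa using h3
  exact htend.limsup_eq

theorem stmt15 : IStable J12 ∧ upperDensity J12 = 1 / 2 := by
  exact ⟨istable, density12⟩
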